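/- Let 1 ≤ p < ∞ and 0 < λ < 1 be real. Then λB_p and the unweighted backward shift B_p on ℓ^p are not topologically conjugate: there is no homeomorphism f : ℓ^p → ℓ^p with f ∘ B_p = (λB_p) ∘ f. -/

import Mathlib

open scoped ENNReal

/-- for `0 < λ < 1`, the shift `λB_p` is not topologically conjugate to
the unweighted backward shift `B_p`. -/
theorem shift_not_conjugate_contraction (p : ℝ≥0∞) [Fact (1 ≤ p)] (hp : p ≠ ∞)
    (l : ℝ) (hl0 : 0 < l) (hl1 : l < 1)
    (B Bl : lp (fun _ : ℕ => ℂ) p → lp (fun _ : ℕ => ℂ) p)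
    (hB : ∀ (x : lp (fun _ : ℕ => ℂ) p) (n : ℕ), (B x : ℕ → ℂ) n = x (n + 1))
    (hBl : ∀ (x : lp (fun _ : ℕ => ℂ) p) (n : ℕ), (Bl x : ℕ → ℂ) n = (l : ℂ) * x (n + 1)) :
    ¬ ∃ f : lp (fun _ : ℕ => ℂ) p ≃ₜ lp (fun _ : ℕ => ℂ) p,
        ∀ x, f (B x) = Bl (f x) := by
  rintro ⟨f, hf⟩
  have hp0 : (0 : ℝ≥0∞) < p := lt_of_lt_of_le zero_lt_one Fact.out
  have hq : 0 < p.toReal := ENNReal.toReal_pos hp0.ne' hp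
  -- `B` does not increase the norm
  have hBnorm : ∀ z : lp (fun _ : ℕ => ℂ) p, ‖B z‖ ≤ ‖z‖ := by
    intro z
    refine lp.norm_le_of_tsum_le hq (norm_nonneg z) ?_
    rw [lp.norm_rpow_eq_tsum hq z]
    refine ((lp.memℓp (B z)).summable hq).tsum_le_tsum_of_inj (fun n => n + 1) (add_left_injective 1)
      (fun c _ => Real.rpow_nonneg (norm_nonneg _) _)
      (fun i => by rw [hB]) ((lp.memℓp z).summable hq)
  -- `Bl = l • B`
  have hBl_eq : ∀ z : lp (fun _ : ℕ => ℂ) p, Bl z = (l : ℂ) • B z := by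
    intro z
    apply lp.ext
    funext n
    rw [lp.coeFn_smul, Pi.smul_apply, hBl, hB, smul_eq_mul]
  have hBlnorm : ∀ z : lp (fun _ : ℕ => ℂ) p, ‖Bl z‖ ≤ l * ‖z‖ := by
    intro z
    rw [hBl_eq z, norm_smul]
    have : ‖(l : ℂ)‖ = l := by
      rw [Complex.norm_real, Real.norm_eq_abs, abs_of_pos hl0]
    rw [this]
    exact mul_le_mul_of_nonneg_left (hBnorm z) hl0.le
  have hBl_iter : ∀ (n : ℕ) (z : lp (fun _ : ℕ => ℂ) p), ‖Bl^[n] z‖ ≤ l ^ n * ‖z‖ := by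
    intro n
    induction n with
    | zero => intro z; simp
    | succ n ih =>
      intro z
      rw [Function.iterate_succ_apply]
      calc ‖Bl^[n] (Bl z)‖ ≤ l ^ n * ‖Bl z‖ := ih (Bl z)
        _ ≤ l ^ n * (l * ‖z‖) :=
          mul_le_mul_of_nonneg_left (hBlnorm z) (pow_nonneg hl0.le n)
        _ = l ^ (n + 1) * ‖z‖ := by ring
  have hconj : ∀ (n : ℕ) (x : lp (fun _ : ℕ => ℂ) p), f (B^[n] x) = Bl^[n] (f x) := by
    intro n
    induction n with
    | zero => intro x; simp
    | succ n ih =>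
      intro x
      rw [Function.iterate_succ_apply', Function.iterate_succ_apply', hf, ih]
  -- `Bl 0 = 0`
  have hBl0 : Bl 0 = 0 := by
    apply lp.ext
    funext n
    rw [hBl]
    simp [lp.coeFn_zero]
  -- `f 0 = 0`
  have hf0 : f 0 = 0 := by
    set a := f.symm 0 with ha
    have hBa : B a = a := by
      apply f.injective
      rw [hf, ha, f.apply_symm_apply, hBl0]
    have hconst : ∀ n, (a : ℕ → ℂ) n = a 0 := by
      intro n
      induction n with
      | zero => rfl
      | succ n ih => rw [← ih, ← hB a n, hBa]
    have hsum : Summable fun n : ℕ => ‖(a : ℕ → ℂ) n‖ ^ p.toReal :=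
      (lp.memℓp a).summable hq
    have hzero : (a : ℕ → ℂ) 0 = 0 := by
      by_contra h
      have h1 : ∀ n : ℕ, ‖(a : ℕ → ℂ) n‖ ^ p.toReal = ‖(a : ℕ → ℂ) 0‖ ^ p.toReal := by
        intro n; rw [hconst n]
      have h2 := hsum.tendsto_atTop_zero
      rw [funext h1] at h2
      have h3 : ‖(a : ℕ → ℂ) 0‖ ^ p.toReal = 0 :=
        tendsto_nhds_unique tendsto_const_nhds h2
      have h4 : ‖(a : ℕ → ℂ) 0‖ = 0 :=
        (Real.rpow_eq_zero (norm_nonneg _) hq.ne').mp h3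
      exact h (norm_eq_zero.mp h4)
    have haz : a = 0 := by
      apply lp.ext
      funext n
      rw [hconst n, hzero, lp.coeFn_zero, Pi.zero_apply]
    have := f.apply_symm_apply 0
    rw [← ha, haz] at this
    exact this
  -- continuity of `f` at `0`
  obtain ⟨η, hη, hfη⟩ := Metric.continuousAt_iff.mp (f.continuous.continuousAt (x := 0)) (ε := 1)
    one_pos
  -- continuity of `f.symm` at `0`
  obtain ⟨δ, hδ, hgδ⟩ := Metric.continuousAt_iff.mp (f.symm.continuous.continuousAt (x := 0))
    (ε := η / 2) (by positivity)
  obtain ⟨n, hn⟩ := exists_pow_lt_of_lt_one hδ hl1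
  -- the witness `x = (η/2) e_n`
  set c : ℂ := ((η / 2 : ℝ) : ℂ) with hc
  set x : lp (fun _ : ℕ => ℂ) p := lp.single p n c with hx
  have hnormc : ‖c‖ = η / 2 := by
    rw [hc, Complex.norm_real, Real.norm_eq_abs, abs_of_pos (by positivity)]
  have hxnorm : ‖x‖ = η / 2 := by
    rw [hx]
    have := lp.norm_single (E := fun _ : ℕ => ℂ) hp0 n c
    rw [this, hnormc]
  -- `B^[n] x = (η/2) e_0`
  have hBsingle : ∀ (m : ℕ), B (lp.single p (m + 1) c) = lp.single p m c := by
    intro m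
    apply lp.ext
    funext k
    rw [hB]
    rcases eq_or_ne k m with h | h
    · subst h
      rw [lp.single_apply_self, lp.single_apply_self]
    · have h1 : k + 1 ≠ m + 1 := by omega
      rw [lp.single_apply_ne (E := fun _ : ℕ => ℂ) p m c h]
      exact lp.single_apply_ne (E := fun _ : ℕ => ℂ) p (m + 1) c h1
  have hBiter : ∀ m : ℕ, B^[m] (lp.single p m c) = lp.single p 0 c := by
    intro m
    induction m with
    | zero => simp
    | succ m ih => rw [Function.iterate_succ_apply, hBsingle, ih]
  -- derive the contradiction
  have hfx : ‖f x‖ < 1 := by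
    have hd : dist x 0 < η := by
      rw [dist_zero_right, hxnorm]; linarith
    have := hfη hd
    rw [hf0, dist_zero_right] at this
    exact this
  have hBlx : ‖Bl^[n] (f x)‖ < δ := by
    calc ‖Bl^[n] (f x)‖ ≤ l ^ n * ‖f x‖ := hBl_iter n (f x)
      _ ≤ l ^ n * 1 := mul_le_mul_of_nonneg_left hfx.le (pow_nonneg hl0.le n)
      _ = l ^ n := mul_one _
      _ < δ := hn
  have hsmall : ‖B^[n] x‖ < η / 2 := by
    have hd : dist (Bl^[n] (f x)) 0 < δ := by rwa [dist_zero_right]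
    have := hgδ hd
    rw [show f.symm 0 = 0 from f.injective (by rw [f.apply_symm_apply, hf0]), dist_zero_right] at this
    rw [← hconj n x, f.symm_apply_apply] at this
    exact this
  rw [hx, hBiter n] at hsmall
  have hns := lp.norm_single (E := fun _ : ℕ => ℂ) hp0 0 c
  rw [hns, hnormc] at hsmall
  exact lt_irrefl _ hsmall
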